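/- For all n ≥ 0 and m ≥ 1, x^n = Σ_{k=0}^{⌊n/m⌋} (C(n,k) - (m-1) C(n,k-1)) f^{(m)}_{n-mk}(x). -/

import Mathlib

noncomputable def acoef (m n k : ℕ) : ℝ :=
  (n.choose k : ℝ) - ((m : ℝ) - 1) * (if k = 0 then 0 else (n.choose (k - 1) : ℝ))

noncomputable def ccoef (m n k : ℕ) : ℝ := if m * k ≤ n then acoef m n k else 0

lemma magic_nat (m k : ℕ) (hm : 1 ≤ m) (hk : 1 ≤ k) :
    (m * k - 1).choose k = (m - 1) * (m * k - 1).choose (k - 1) := by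
  obtain ⟨j, rfl⟩ : ∃ j, k = j + 1 := ⟨k - 1, (Nat.succ_pred_eq_of_pos hk).symm⟩
  obtain ⟨i, rfl⟩ : ∃ i, m = i + 1 := ⟨m - 1, (Nat.succ_pred_eq_of_pos hm).symm⟩
  have h := Nat.choose_succ_right_eq ((i + 1) * (j + 1) - 1) j
  have h2 : (i + 1) * (j + 1) - 1 - j = i * (j + 1) := by
    have : (i + 1) * (j + 1) = i * (j + 1) + j + 1 := by ring
    omega
  rw [h2] at h
  have := Nat.eq_of_mul_eq_mul_right (Nat.succ_pos j)
    (h.trans (by ring :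
      ((i+1)*(j+1)-1).choose j * (i * (j + 1)) = i * ((i+1)*(j+1)-1).choose j * (j + 1)))
  simpa [Nat.add_sub_cancel] using this

lemma magic_real (m k : ℕ) (hm : 1 ≤ m) (hk : 1 ≤ k) :
    acoef m (m * k - 1) k = 0 := by
  have h := magic_nat m k hm hk
  have hk0 : k ≠ 0 := by omega
  simp only [acoef, hk0, if_false]
  have : ((m * k - 1).choose k : ℝ) = ((m - 1 : ℕ) : ℝ) * ((m * k - 1).choose (k - 1) : ℝ) := by
    exact_mod_cast congrArg (Nat.cast : ℕ → ℝ) h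
  rw [this, Nat.cast_sub hm]
  ring

lemma acoef_pascal (m n j : ℕ) :
    acoef m (n + 1) (j + 1) = acoef m n (j + 1) + acoef m n j := by
  simp only [acoef, Nat.choose_succ_succ, Nat.cast_add, Nat.add_sub_cancel]
  rcases Nat.eq_zero_or_pos j with rfl | hj
  · simp; ring
  · obtain ⟨i, rfl⟩ : ∃ i, j = i + 1 := ⟨j - 1, (Nat.succ_pred_eq_of_pos hj).symm⟩
    simp [Nat.choose_succ_succ, Nat.add_sub_cancel]
    ring

lemma ccoef_pascal (m n k : ℕ) (hm : 1 ≤ m) (hn : m ≤ n + 1) :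
    ccoef m (n + 1) k =
      ccoef m n k + (if 1 ≤ k ∧ m * k ≤ n + 1 then ccoef m n (k - 1) else 0) := by
  rcases Nat.eq_zero_or_pos k with rfl | hk
  · simp [ccoef, acoef]
  obtain ⟨j, rfl⟩ : ∃ j, k = j + 1 := ⟨k - 1, (Nat.succ_pred_eq_of_pos hk).symm⟩
  have e : m * (j + 1) = m * j + m := by ring
  by_cases h1 : m * (j + 1) ≤ n
  · have h2 : m * (j + 1) ≤ n + 1 := by omega
    have h3 : m * j ≤ n := by omega
    simp only [ccoef, if_pos h1, if_pos h2, if_pos h3, Nat.add_sub_cancel,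
      if_pos (And.intro (Nat.le_add_left 1 j) h2)]
    exact acoef_pascal m n j
  · by_cases h2 : m * (j + 1) ≤ n + 1
    · have hn' : n = m * (j + 1) - 1 := by omega
      have h3 : m * j ≤ n := by omega
      have hz : acoef m n (j + 1) = 0 := by rw [hn']; exact magic_real m (j + 1) hm (by omega)
      simp only [ccoef, if_pos h2, if_neg h1, if_pos h3, Nat.add_sub_cancel,
        if_pos (And.intro (Nat.le_add_left 1 j) h2)]
      rw [acoef_pascal m n j, hz]
    · have : ¬ (1 ≤ j + 1 ∧ m * (j + 1) ≤ n + 1) := by tauto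
      simp only [ccoef, if_neg h1, if_neg h2, if_neg this]
      ring

lemma key_expansion
    (m : ℕ) (hm : 1 ≤ m)
    (f : ℕ → ℝ → ℝ)
    (hlt : ∀ n, n < m → ∀ x, f n x = x ^ n)
    (hrec : ∀ n, m ≤ n → ∀ x, f n x = x * f (n - 1) x - f (n - m) x) :
    ∀ (n : ℕ) (x : ℝ),
      x ^ n = ∑ k ∈ Finset.range (n + 1), ccoef m n k * f (n - m * k) x := by
  intro n
  induction n using Nat.strong_induction_on with
  | _ n ih =>
    intro x
    by_cases hnm : n < m
    · rw [Finset.sum_eq_single 0]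
      · simp [ccoef, acoef, hlt n hnm x]
      · intro k hk hk0
        have hmk : ¬ m * k ≤ n := by
          have : m ≤ m * k := Nat.le_mul_of_pos_right m (Nat.pos_of_ne_zero hk0)
          omega
        simp [ccoef, hmk]
      · intro h; exact absurd (Finset.mem_range.mpr (Nat.succ_pos n)) h
    · push_neg at hnm
      obtain ⟨n', rfl⟩ : ∃ n', n = n' + 1 := ⟨n - 1, by omega⟩
      have step1 : ∑ k ∈ Finset.range (n' + 1 + 1), ccoef m (n' + 1) k * f (n' + 1 - m * k) x
          = ∑ k ∈ Finset.range (n' + 1 + 1),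
              (ccoef m n' k * f (n' + 1 - m * k) x
                + (if 1 ≤ k ∧ m * k ≤ n' + 1 then ccoef m n' (k - 1) else 0)
                    * f (n' + 1 - m * k) x) := by
        refine Finset.sum_congr rfl fun k _ => ?_
        rw [ccoef_pascal m n' k hm hnm, add_mul]
      rw [step1, Finset.sum_add_distrib]
      have hA : ∑ k ∈ Finset.range (n' + 1 + 1), ccoef m n' k * f (n' + 1 - m * k) x
          = ∑ k ∈ Finset.range (n' + 1), ccoef m n' k * f (n' + 1 - m * k) x := by
        rw [Finset.sum_range_succ]
        have : ¬ m * (n' + 1) ≤ n' := by nlinarith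
        simp [ccoef, this]
      have hB : ∑ k ∈ Finset.range (n' + 1 + 1),
            (if 1 ≤ k ∧ m * k ≤ n' + 1 then ccoef m n' (k - 1) else 0) * f (n' + 1 - m * k) x
          = ∑ k ∈ Finset.range (n' + 1),
              (if m * (k + 1) ≤ n' + 1 then ccoef m n' k else 0) * f (n' + 1 - m * (k + 1)) x := by
        rw [Finset.sum_range_succ']
        simp only [Nat.add_sub_cancel]
        have h0 : ¬ (1 ≤ 0 ∧ m * 0 ≤ n' + 1) := by omega
        rw [if_neg h0, zero_mul, add_zero]
        refine Finset.sum_congr rfl fun k _ => ?_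
        congr 1
        simp [Nat.le_add_left]
      rw [hA, hB, ← Finset.sum_add_distrib]
      have termwise : ∀ k ∈ Finset.range (n' + 1),
          ccoef m n' k * f (n' + 1 - m * k) x
            + (if m * (k + 1) ≤ n' + 1 then ccoef m n' k else 0) * f (n' + 1 - m * (k + 1)) x
          = x * (ccoef m n' k * f (n' - m * k) x) := by
        intro k _
        have e : m * (k + 1) = m * k + m := by ring
        by_cases hk : m * k ≤ n'
        · by_cases h2 : m * (k + 1) ≤ n' + 1
          · have hrec' := hrec (n' + 1 - m * k) (by omega) x
            have e1 : n' + 1 - m * k - 1 = n' - m * k := by omega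
            have e2 : n' + 1 - m * k - m = n' + 1 - m * (k + 1) := by omega
            rw [e1, e2] at hrec'
            rw [if_pos h2, hrec']
            ring
          · have hsmall : n' + 1 - m * k < m := by omega
            have hsmall' : n' - m * k < m := by omega
            have e3 : n' + 1 - m * k = (n' - m * k) + 1 := by omega
            rw [if_neg h2, hlt _ hsmall x, hlt _ hsmall' x, e3, pow_succ]
            ring
        · simp [ccoef, hk]
      rw [Finset.sum_congr rfl termwise, ← Finset.mul_sum, ← ih n' (by omega) x, pow_succ]
      ring

theorem m_fib_poly_moment_expansion
    (m : ℕ) (hm : 1 ≤ m)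
    (f : ℕ → ℝ → ℝ)
    (hlt : ∀ n, n < m → ∀ x, f n x = x ^ n)
    (hrec : ∀ n, m ≤ n → ∀ x, f n x = x * f (n - 1) x - f (n - m) x) :
    ∀ (n : ℕ) (x : ℝ),
      x ^ n = ∑ k ∈ Finset.range (n / m + 1),
        ((n.choose k : ℝ) -
          ((m : ℝ) - 1) * (if k = 0 then 0 else (n.choose (k - 1) : ℝ))) *
          f (n - m * k) x := by
  intro n x
  rw [key_expansion m hm f hlt hrec n x]
  have hsub : Finset.range (n / m + 1) ⊆ Finset.range (n + 1) := by
    apply Finset.range_subset_range.mpr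
    have := Nat.div_le_self n m
    omega
  rw [← Finset.sum_subset hsub (fun k hk hk' => ?_)]
  · refine Finset.sum_congr rfl fun k hk => ?_
    have hk' : k ≤ n / m := by simpa using Nat.lt_succ_iff.mp (Finset.mem_range.mp hk)
    have hmk : m * k ≤ n := by
      have h2 := (Nat.le_div_iff_mul_le (by omega : 0 < m)).mp hk'
      rw [mul_comm] at h2
      exact h2
    simp [ccoef, hmk, acoef]
  · have hk1 : k ≤ n := Nat.lt_succ_iff.mp (Finset.mem_range.mp hk)
    have hk2 : n / m < k := by
      by_contra h
      exact hk' (Finset.mem_range.mpr (by omega))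
    have hmk : ¬ m * k ≤ n := by
      intro h
      rw [mul_comm] at h
      have := (Nat.le_div_iff_mul_le (by omega : 0 < m)).mpr h
      omega
    simp [ccoef, hmk]
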